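/- Let A be a DFA over the alphabet Bool with finite state set Q such that L(A) ⊆ 𝔇. Then the D-prefix set R_D = {w ∈ D : ∃v, w·v ∈ L(A)} is finite, and its cardinality satisfies |R_D| ≤ 2·|Q|^3. -/

import Mathlib

/-- The morphism β with β(0)=01, β(1)=10, extended to words. -/
def beta (x : List Bool) : List Bool := x.flatMap (fun b => [b, !b])

/-- The map ex : x ↦ β(x)·11·0^(|x|²+3)·β(x)·11·0^(|x|²+3). -/
def ex (x : List Bool) : List Bool :=
  beta x ++ [true, true] ++ List.replicate (x.length ^ 2 + 3) false ++
  beta x ++ [true, true] ++ List.replicate (x.length ^ 2 + 3) false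

/-- D is the image of ex. -/
def D : Set (List Bool) := Set.range ex

/-- 𝔇 is the set of all extensions of words of D. -/
def Dext : Set (List Bool) := {w | ∃ u ∈ D, ∃ v : List Bool, w = u ++ v}

lemma beta_cons (a : Bool) (x : List Bool) : beta (a :: x) = a :: (!a) :: beta x := rfl

lemma betaC : ∀ (x u r s : List Bool),
    beta x ++ true :: true :: r = beta u ++ true :: true :: s → x = u ∧ r = s := by
  intro x
  induction x with
  | nil =>
    intro u r s h
    cases u with
    | nil => simpa [beta] using h
    | cons b u' =>
      rw [beta_cons] at h
      simp [beta] at h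
      obtain ⟨hb, hnb, -⟩ := h
      subst hb; simp at hnb
  | cons a x' ih =>
    intro u r s h
    cases u with
    | nil =>
      rw [beta_cons] at h
      simp [beta] at h
      obtain ⟨hb, hnb, -⟩ := h
      subst hb; simp at hnb
    | cons b u' =>
      rw [beta_cons, beta_cons] at h
      simp only [List.cons_append, List.cons.injEq] at h
      obtain ⟨h1, h2, h3⟩ := h
      obtain ⟨h4, h5⟩ := ih u' r s h3
      exact ⟨by rw [h1, h4], h5⟩

lemma first_one (x r : List Bool) :
    ∃ j, j ≤ 2 * x.length ∧ j ≤ 1 ∧ (beta x ++ true :: true :: r)[j]? = some true := by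
  cases x with
  | nil => exact ⟨0, by simp, by simp, by simp [beta]⟩
  | cons a x' =>
    cases a with
    | true => exact ⟨0, by simp, by simp, by simp [beta_cons]⟩
    | false => exact ⟨1, by simp; omega, by simp, by simp [beta_cons]⟩

lemma noteq (x x' t t' : List Bool) (h : x.length < x'.length) :
    List.replicate (x'.length ^ 2 + 3) false ++ (beta x' ++ true :: true :: t') ≠
      List.replicate (x.length ^ 2 + 3) false ++ (beta x ++ true :: true :: t) := by
  intro E
  obtain ⟨j, hj2n, hj1, hj⟩ := first_one x t
  set m := x.length ^ 2 + 3 with hm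
  set m' := x'.length ^ 2 + 3 with hm'
  have hlt : m + j < m' := by
    have h1 : x.length ^ 2 + 2 * x.length < x'.length ^ 2 := by nlinarith
    omega
  have hL : (List.replicate m' false ++ (beta x' ++ true :: true :: t'))[m + j]? = some false := by
    rw [List.getElem?_append_left (by simpa using hlt), List.getElem?_replicate, if_pos hlt]
  have hR : (List.replicate m false ++ (beta x ++ true :: true :: t))[m + j]? = some true := by
    rw [List.getElem?_append_right (by simp), List.length_replicate]
    simpa using hj
  rw [E, hR] at hL
  simp at hL

lemma ex_eq (x : List Bool) : ex x = beta x ++ true :: true ::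
    (List.replicate (x.length ^ 2 + 3) false ++ (beta x ++ true :: true ::
      List.replicate (x.length ^ 2 + 3) false)) := by
  simp [ex, List.append_assoc]

lemma key {Q : Type} [Fintype Q] (A : DFA Bool Q)
    (hL : ∀ w ∈ A.accepts, w ∈ Dext)
    (x x' v v' : List Bool) (hx : ex x ++ v ∈ A.accepts) (hx' : ex x' ++ v' ∈ A.accepts)
    (hp : A.eval (beta x ++ true :: true :: []) = A.eval (beta x' ++ true :: true :: [])) :
    x = x' := by
  set m := x.length ^ 2 + 3 with hm
  set m' := x'.length ^ 2 + 3 with hm'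
  set rest : List Bool :=
    List.replicate m' false ++ (beta x' ++ true :: true :: (List.replicate m' false ++ v'))
    with hrest
  set w : List Bool := beta x ++ true :: true :: rest with hwdef
  have hsplit : ∀ y : List Bool, y ++ true :: true :: rest = (y ++ [true, true]) ++ rest := by
    intro y; simp [List.append_assoc]
  have hw : w ∈ A.accepts := by
    rw [DFA.mem_accepts] at hx' ⊢
    have e2 : ex x' ++ v' = (beta x' ++ [true, true]) ++ rest := by
      simp [ex, hrest, hm', List.append_assoc]
    have h1 : A.eval w = A.eval (ex x' ++ v') := by
      calc A.eval w = A.evalFrom (A.eval (beta x ++ [true, true])) rest := by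
            rw [hwdef, hsplit (beta x)]; exact A.evalFrom_of_append A.start _ rest
        _ = A.evalFrom (A.eval (beta x' ++ [true, true])) rest := by rw [hp]
        _ = A.eval (ex x' ++ v') := by
            rw [e2]; exact (A.evalFrom_of_append A.start _ rest).symm
    rwa [h1]
  obtain ⟨u, ⟨z, hz⟩, t, hwt⟩ := hL w hw
  subst hz
  rw [hwdef, ex_eq] at hwt
  simp only [List.append_assoc, List.cons_append] at hwt
  obtain ⟨hxz, hrt⟩ := betaC x z rest _ hwt
  subst hxz
  rw [hrest] at hrt
  try simp only [List.append_assoc, List.cons_append] at hrt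
  -- hrt : replicate m' false ++ (beta x' ++ true::true::(replicate m' false ++ v'))
  --     = replicate m false ++ (beta x ++ true::true::(replicate m false ++ t))
  have hlen : x.length = x'.length := by
    rcases lt_trichotomy x.length x'.length with h | h | h
    · exact absurd hrt (noteq x x' _ _ h)
    · exact h
    · exact absurd hrt.symm (noteq x' x _ _ h)
  have hmm : m = m' := by rw [hm, hm', hlen]
  rw [← hmm] at hrt
  have h2 := List.append_cancel_left hrt
  exact (betaC x' x _ _ h2).1.symm

/-- If L(A) ⊆ 𝔇 then the D-prefix set R_D is finite of cardinality ≤ 2|Q|³. -/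
theorem stmt_13 (Q : Type) [Fintype Q] (A : DFA Bool Q)
    (hL : ∀ w ∈ A.accepts, w ∈ Dext) :
    ({w | w ∈ D ∧ ∃ v : List Bool, w ++ v ∈ A.accepts} : Set (List Bool)).Finite ∧
      ({w | w ∈ D ∧ ∃ v : List Bool, w ++ v ∈ A.accepts} : Set (List Bool)).ncard ≤
        2 * Fintype.card Q ^ 3 := by
  set S : Set (List Bool) := {w | w ∈ D ∧ ∃ v : List Bool, w ++ v ∈ A.accepts} with hS
  set X : Set (List Bool) := {x | ∃ v, ex x ++ v ∈ A.accepts} with hX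
  have hSX : S = ex '' X := by
    ext w
    constructor
    · rintro ⟨⟨z, hz⟩, v, hv⟩
      exact ⟨z, ⟨v, by rw [hz]; exact hv⟩, hz⟩
    · rintro ⟨z, ⟨v, hv⟩, hz⟩
      exact ⟨⟨z, hz⟩, v, by rw [← hz]; exact hv⟩
  have hinj : Set.InjOn (fun x => A.eval (beta x ++ [true, true])) X := by
    rintro a ⟨v, hv⟩ b ⟨v', hv'⟩ hab
    exact key A hL a b v v' hv hv' hab
  have hXfin : X.Finite := Set.Finite.of_finite_image (Set.toFinite _) hinj
  have hXcard : X.ncard ≤ Fintype.card Q := by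
    rw [← Set.ncard_image_of_injOn hinj]
    have h := Set.ncard_le_ncard
      (Set.subset_univ ((fun x => A.eval (beta x ++ [true, true])) '' X)) Set.finite_univ
    simpa [Set.ncard_univ, Nat.card_eq_fintype_card] using h
  have hfin : S.Finite := by rw [hSX]; exact hXfin.image ex
  refine ⟨hfin, ?_⟩
  have h1 : S.ncard ≤ X.ncard := by rw [hSX]; exact Set.ncard_image_le hXfin
  calc S.ncard ≤ X.ncard := h1
    _ ≤ Fintype.card Q := hXcard
    _ ≤ Fintype.card Q ^ 3 := Nat.le_self_pow (by norm_num) _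
    _ ≤ 2 * Fintype.card Q ^ 3 := Nat.le_mul_of_pos_left _ (by norm_num)
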